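/- Let X be the infinite-dimensional torus (ℝ/ℤ)^ℕ and P : X → X the endomorphism P(x₁, x₂, …) = (p x₁, p x₂, …) for a prime p. Then for every x ∈ X, the set of all preimages ⋃_{n∈ℕ} P^{-n}(x) is dense in X. -/

import Mathlib

open Filter Topology

lemma iter_smul_eq (p : ℕ) (n : ℕ) (y : ℕ → AddCircle (1:ℝ)) :
    (fun z : ℕ → AddCircle (1 : ℝ) => fun i => p • z i)^[n] y = fun i => p ^ n • y i := by
  induction n with
  | zero => simp
  | succ n ih =>
      rw [Function.iterate_succ_apply', ih]
      funext i
      simp [pow_succ', mul_smul]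

lemma addcircle_dist_le (r s : ℝ) :
    dist ((r : AddCircle (1:ℝ))) ((s : AddCircle (1:ℝ))) ≤ |r - s| := by
  rw [dist_eq_norm]
  have : ((r : AddCircle (1:ℝ)) - s) = ((r - s : ℝ) : AddCircle (1:ℝ)) := by
    rw [← QuotientAddGroup.mk_sub]
  rw [this]
  simpa using QuotientAddGroup.norm_mk_le_norm (S := AddSubgroup.zmultiples (1:ℝ)) (m := r - s)

theorem preimages_of_mul_p_dense
    (p : ℕ) (hp : p.Prime) (x : ℕ → AddCircle (1 : ℝ)) :
    Dense {y : ℕ → AddCircle (1 : ℝ) |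
      ∃ n : ℕ, (fun z : ℕ → AddCircle (1 : ℝ) => fun i => p • z i)^[n] y = x} := by
  rw [dense_iff_inter_open]
  rintro U hU ⟨z, hz⟩
  obtain ⟨I, u, hu, hsub⟩ := isOpen_pi_iff.mp hU z hz
  -- lifts of x and z
  have hsurj : Function.Surjective ((↑) : ℝ → AddCircle (1:ℝ)) :=
    QuotientAddGroup.mk'_surjective _
  choose a ha using fun i => hsurj (x i)
  choose b hb using fun i => hsurj (z i)
  have hp1 : (1:ℝ) < (p:ℝ) := by exact_mod_cast hp.one_lt
  have hppos : (0:ℝ) < (p:ℝ) := by linarith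
  -- the approximating preimages
  set y : ℕ → ℕ → AddCircle (1:ℝ) :=
    fun n i => (((a i + ⌊(p:ℝ)^n * b i - a i⌋) / (p:ℝ)^n : ℝ) : AddCircle (1:ℝ)) with hy
  -- each y n is a preimage of x under P^n
  have hpre : ∀ n, (fun z : ℕ → AddCircle (1 : ℝ) => fun i => p • z i)^[n] (y n) = x := by
    intro n
    rw [iter_smul_eq]
    funext i
    have hpn : ((p:ℝ))^n ≠ 0 := by positivity
    have : (p ^ n : ℕ) • (y n i) =
        (((p:ℝ)^n * ((a i + ⌊(p:ℝ)^n * b i - a i⌋) / (p:ℝ)^n) : ℝ) : AddCircle (1:ℝ)) := by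
      rw [hy]
      push_cast
      rw [← smul_eq_mul, ← QuotientAddGroup.mk_nsmul]
      push_cast
      ring_nf
    rw [this, mul_div_cancel₀ _ hpn]
    have : ((a i + (⌊(p:ℝ)^n * b i - a i⌋ : ℝ) : ℝ) : AddCircle (1:ℝ))
        = (a i : AddCircle (1:ℝ)) + ((⌊(p:ℝ)^n * b i - a i⌋ : ℝ) : AddCircle (1:ℝ)) := by
      rw [QuotientAddGroup.mk_add]
    rw [this, ha]
    have hz0 : ((((⌊(p:ℝ)^n * b i - a i⌋ : ℤ) : ℝ)) : AddCircle (1:ℝ)) = 0 := by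
      rw [AddCircle.coe_eq_zero_iff]
      exact ⟨⌊(p:ℝ)^n * b i - a i⌋, by simp⟩
    rw [hz0, add_zero]
  -- y n i → z i
  have htend : ∀ i, Tendsto (fun n => y n i) atTop (𝓝 (z i)) := by
    intro i
    rw [← hb i]
    have hdist : ∀ n, dist (y n i) ((b i : AddCircle (1:ℝ))) ≤ ((p:ℝ)⁻¹)^n := by
      intro n
      refine le_trans (addcircle_dist_le _ _) ?_
      have hpn : (0:ℝ) < (p:ℝ)^n := by positivity
      set k : ℝ := (⌊(p:ℝ)^n * b i - a i⌋ : ℝ) with hk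
      have hk1 : 0 ≤ (p:ℝ)^n * b i - a i - k := by
        have := Int.floor_le ((p:ℝ)^n * b i - a i); linarith
      have hk2 : (p:ℝ)^n * b i - a i - k ≤ 1 := by
        have := Int.sub_one_lt_floor ((p:ℝ)^n * b i - a i); linarith
      have heq : (a i + k)/(p:ℝ)^n - b i = -(((p:ℝ)^n * b i - a i - k)/(p:ℝ)^n) := by
        field_simp
        ring
      rw [heq, abs_neg, abs_of_nonneg (div_nonneg hk1 hpn.le)]
      calc ((p:ℝ)^n * b i - a i - k)/(p:ℝ)^n ≤ 1/(p:ℝ)^n :=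
            (div_le_div_iff_of_pos_right hpn).mpr hk2
        _ = ((p:ℝ)⁻¹)^n := by rw [one_div, inv_pow]
    refine tendsto_iff_dist_tendsto_zero.mpr ?_
    exact squeeze_zero (fun n => dist_nonneg) hdist
      (tendsto_pow_atTop_nhds_zero_of_lt_one (by positivity) (inv_lt_one_of_one_lt₀ hp1))
  -- eventually y n lies in the basic open set
  have hev : ∀ᶠ n in atTop, ∀ i ∈ I, y n i ∈ u i := by
    rw [Filter.eventually_all_finset]
    intro i hi
    exact (htend i).eventually ((hu i hi).1.mem_nhds (hu i hi).2)
  obtain ⟨n, hn⟩ := hev.exists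
  exact ⟨y n, hsub (fun i hi => hn i hi), n, hpre n⟩
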